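/- arXiv:2210.11304 — 4 statements merged into one kernel-verified Lean document; each statement's English description precedes it below -/
import Mathlib

section
/- Let Γ be a group acting by homeomorphisms on a compact Hausdorff topological space X, equipped with its Borel σ-algebra, and let Λ ≤ Γ be a subgroup that is singular for this action, i.e., for every Λ-invariant Borel probability measure μ on X and every γ ∈ Γ \ Λ, the measures μ and γ_*μ are mutually singular. Suppose Λ' is a subgroup of finite index in Λ, and Λ'' is a subgroup of Γ containing Λ' such that there exists at least one Λ''-invariant Borel probability measure on X. Then Λ'' ≤ Λ. (This is the content of the paper's lemma that a singular subgroup is commensurably maximal amenable, with the amenability of the overgroup Λ'' entering only through the existence of the invariant probability measure.) -/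
open MeasureTheory ENNReal

/-- A singular subgroup is commensurably maximal amenable: if `Λ` is singular for a
continuous action of `Γ` on a compact Hausdorff space `X`, `Λ'` has finite index in `Λ`,
and `Λ'' ≥ Λ'` admits an invariant Borel probability measure on `X`, then `Λ'' ≤ Λ`. -/
theorem singular_implies_commensurably_maximal
    {Γ X : Type*} [Group Γ] [TopologicalSpace X] [CompactSpace X] [T2Space X]
    [MeasurableSpace X] [BorelSpace X] [MulAction Γ X]
    (hcont : ∀ γ : Γ, Continuous fun x : X => γ • x)
    (Λ : Subgroup Γ)
    (hsing : ∀ μ : Measure X, IsProbabilityMeasure μ →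
      (∀ l ∈ Λ, Measure.map (fun x : X => l • x) μ = μ) →
      ∀ γ ∈ (Λ : Set Γ)ᶜ, μ ⟂ₘ Measure.map (fun x : X => γ • x) μ)
    (Λ' : Subgroup Γ) (hle : Λ' ≤ Λ) (hfi : (Λ'.subgroupOf Λ).FiniteIndex)
    (Λ'' : Subgroup Γ) (hle' : Λ' ≤ Λ'')
    (hinv : ∃ μ : Measure X, IsProbabilityMeasure μ ∧
      ∀ g ∈ Λ'', Measure.map (fun x : X => g • x) μ = μ) :
    Λ'' ≤ Λ := by
  obtain ⟨μ, hμprob, hμinv⟩ := hinv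
  have mγ : ∀ a : Γ, Measurable (fun x : X => a • x) := fun a => (hcont a).measurable
  -- composition of pushforwards
  have hcomp : ∀ (a b : Γ) (ρ : Measure X),
      Measure.map (fun x : X => a • x) (Measure.map (fun x : X => b • x) ρ)
        = Measure.map (fun x : X => (a * b) • x) ρ := by
    intro a b ρ
    rw [Measure.map_map (mγ a) (mγ b)]
    congr 1
    funext x
    simp [Function.comp, mul_smul]
  set H := Λ'.subgroupOf Λ with hH
  haveI : Fintype (Λ ⧸ H) := H.fintypeQuotientOfFiniteIndex
  -- the averaged measure
  set F : (Λ ⧸ H) → Measure X :=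
    fun q => Measure.map (fun x : X => ((q.out : Λ) : Γ) • x) μ with hF
  -- coe of out of identity coset acts trivially
  have hout_mem : ∀ q : Λ ⧸ H, ∀ h : H, ((h : Λ) : Γ) ∈ Λ'' := by
    intro q h
    exact hle' h.2
  -- F is equivariant
  have hFequiv : ∀ (l : Λ) (q : Λ ⧸ H),
      F (l • q) = Measure.map (fun x : X => (l : Γ) • x) (F q) := by
    intro l q
    obtain ⟨h, hh⟩ := QuotientGroup.mk_out_eq_mul H (l * q.out)
    have h1 : l • q = QuotientGroup.mk (l * q.out) := by
      rw [← MulAction.Quotient.mk_smul_out H l q]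
      rfl
    have h2 : ((((l • q).out : Λ) : Γ)) = (l : Γ) * (q.out : Γ) * ((h : Λ) : Γ) := by
      rw [h1, hh]
      push_cast
      ring
    have hhinv : Measure.map (fun x : X => (((h : Λ) : Γ)) • x) μ = μ :=
      hμinv _ (hle' h.2)
    simp only [hF, h2]
    rw [← hcomp ((l : Γ) * (q.out : Γ)) ((h : Λ) : Γ) μ, hhinv,
      ← hcomp (l : Γ) ((q.out : Γ)) μ]
  -- pushforward of a finite sum
  have hmapsum : ∀ (a : Γ) (G : (Λ ⧸ H) → Measure X),
      Measure.map (fun x : X => a • x) (∑ q : Λ ⧸ H, G q)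
        = ∑ q : Λ ⧸ H, Measure.map (fun x : X => a • x) (G q) := by
    intro a G
    ext s hs
    rw [Measure.map_apply (mγ a) hs, Measure.finset_sum_apply, Measure.finset_sum_apply]
    simp_rw [Measure.map_apply (mγ a) hs]
  set ν : Measure X := ∑ q : Λ ⧸ H, F q with hν
  set c : ℝ≥0∞ := (Fintype.card (Λ ⧸ H) : ℝ≥0∞) with hc
  have hc0 : c ≠ 0 := by
    simp [hc, Fintype.card_ne_zero]
  have hctop : c ≠ ⊤ := by simp [hc]
  have hFuniv : ∀ q : Λ ⧸ H, F q Set.univ = 1 := by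
    intro q
    rw [hF]
    rw [Measure.map_apply (mγ _) MeasurableSet.univ]
    simp
  set ν' : Measure X := c⁻¹ • ν with hν'
  have hν'prob : IsProbabilityMeasure ν' := by
    constructor
    rw [hν', Measure.smul_apply, hν, Measure.finset_sum_apply]
    simp only [hFuniv]
    simp only [Finset.sum_const, Finset.card_univ, nsmul_eq_mul, mul_one, smul_eq_mul]
    rw [← hc, ENNReal.inv_mul_cancel hc0 hctop]
  -- ν' is Λ-invariant
  have hν'inv : ∀ l ∈ Λ, Measure.map (fun x : X => l • x) ν' = ν' := by
    intro l hl
    rw [hν', Measure.map_smul, hν, hmapsum]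
    congr 1
    have := Equiv.sum_comp (MulAction.toPerm (⟨l, hl⟩ : Λ) : Equiv.Perm (Λ ⧸ H)) F
    calc ∑ q : Λ ⧸ H, Measure.map (fun x : X => l • x) (F q)
        = ∑ q : Λ ⧸ H, F ((⟨l, hl⟩ : Λ) • q) := by
          refine Finset.sum_congr rfl fun q _ => ?_
          rw [hFequiv ⟨l, hl⟩ q]
      _ = ∑ q : Λ ⧸ H, F q := this
  -- identity coset gives back μ
  obtain ⟨h0, hh0⟩ := QuotientGroup.mk_out_eq_mul H 1
  have hq0 : F (QuotientGroup.mk (1 : Λ)) = μ := by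
    have hcoe : (((QuotientGroup.mk (1 : Λ) : Λ ⧸ H).out : Λ) : Γ) = ((h0 : Λ) : Γ) := by
      rw [hh0]; push_cast; rw [one_mul]
    simp only [hF, hcoe]
    exact hμinv _ (hle' h0.2)
  intro g hg
  by_contra hgΛ
  obtain ⟨s, hs, h1, h2⟩ := hsing ν' hν'prob hν'inv g hgΛ
  -- μ s = 0
  have hνs : ν s = 0 := by
    rw [hν', Measure.smul_apply, smul_eq_mul] at h1
    rcases (mul_eq_zero.mp h1) with h | h
    · exact absurd (ENNReal.inv_eq_zero.mp h) hctop
    · exact h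
  have hμs : μ s = 0 := by
    rw [hν, Measure.finset_sum_apply] at hνs
    have := (Finset.sum_eq_zero_iff.mp hνs) (QuotientGroup.mk (1 : Λ)) (Finset.mem_univ _)
    rwa [hq0] at this
  -- μ sᶜ = 0
  have hμsc : μ sᶜ = 0 := by
    have hmap : Measure.map (fun x : X => g • x) ν' sᶜ = 0 := h2
    rw [hν', Measure.map_smul, hν, hmapsum, Measure.smul_apply, smul_eq_mul] at hmap
    have hsum : (∑ q : Λ ⧸ H, Measure.map (fun x : X => g • x) (F q)) sᶜ = 0 := by
      rcases mul_eq_zero.mp hmap with h | h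
      · exact absurd (ENNReal.inv_eq_zero.mp h) hctop
      · exact h
    rw [Measure.finset_sum_apply] at hsum
    have := (Finset.sum_eq_zero_iff.mp hsum) (QuotientGroup.mk (1 : Λ)) (Finset.mem_univ _)
    rw [hq0, hμinv g hg] at this
    exact this
  have : (1 : ℝ≥0∞) = 0 := by
    have huniv : μ Set.univ ≤ μ s + μ sᶜ := by
      rw [← Set.union_compl_self s]
      exact measure_union_le s sᶜ
    rw [measure_univ, hμs, hμsc, add_zero] at huniv
    exact le_antisymm huniv zero_le
  exact one_ne_zero this
end

section
/- Let Γ be a group acting on a measurable space X by measurable bijections, let Λ ≤ Γ be a subgroup, and let Λ' be a subgroup of finite index in Λ. Let μ be a Λ'-invariant probability measure on X. Then the orbit {λ_*μ : λ ∈ Λ} of μ under pushforward by elements of Λ is finite, and the uniform average μ' of the finitely many measures in this orbit is a Λ-invariant probability measure with the property that for every γ ∈ Γ satisfying γ_*μ = μ, the measures γ_*μ' and μ' are not mutually singular. -/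
open MeasureTheory
open scoped ENNReal

/-- If `μ` is a probability measure invariant under a finite-index subgroup `Λ'` of `Λ`,
then the `Λ`-orbit of `μ` under pushforward is finite, and the uniform average `μ'` of the
measures in this orbit is a `Λ`-invariant probability measure such that for every `γ ∈ Γ`
with `γ_*μ = μ`, the measures `γ_*μ'` and `μ'` are not mutually singular. -/
theorem finite_orbit_average_invariant_not_singular
    {Γ X : Type*} [Group Γ] [MeasurableSpace X] [MulAction Γ X]
    (hmeas : ∀ γ : Γ, Measurable fun x : X => γ • x)
    (Λ Λ' : Subgroup Γ) (hle : Λ' ≤ Λ) (hfi : (Λ'.subgroupOf Λ).FiniteIndex)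
    (μ : Measure X) (hprob : IsProbabilityMeasure μ)
    (hinv : ∀ l ∈ Λ', Measure.map (fun x : X => l • x) μ = μ) :
    ∃ (O : Finset (Measure X)) (μ' : Measure X),
      (O : Set (Measure X)) =
        {ν : Measure X | ∃ l ∈ Λ, ν = Measure.map (fun x : X => l • x) μ} ∧
      μ' = (O.card : ℝ≥0∞)⁻¹ • ∑ ν ∈ O, ν ∧
      IsProbabilityMeasure μ' ∧
      (∀ l ∈ Λ, Measure.map (fun x : X => l • x) μ' = μ') ∧
      (∀ γ : Γ, Measure.map (fun x : X => γ • x) μ = μ →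
        ¬ (Measure.map (fun x : X => γ • x) μ' ⟂ₘ μ')) := by
  classical
  have comp : ∀ (γ δ : Γ) (ρ : Measure X),
      Measure.map (fun x : X => γ • x) (Measure.map (fun x : X => δ • x) ρ)
        = Measure.map (fun x : X => (γ * δ) • x) ρ := by
    intro γ δ ρ
    rw [Measure.map_map (hmeas γ) (hmeas δ)]
    congr 1; ext x; simp [mul_smul]
  have mapid : ∀ ρ : Measure X, Measure.map (fun x : X => (1 : Γ) • x) ρ = ρ := by
    intro ρ
    have : (fun x : X => (1 : Γ) • x) = id := by ext x; simp
    rw [this, Measure.map_id]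
  set S : Set (Measure X) :=
    {ν : Measure X | ∃ l ∈ Λ, ν = Measure.map (fun x : X => l • x) μ} with hS
  -- the map factors through the finite quotient
  have hwd : ∀ a b : Λ, (@Setoid.r _ (QuotientGroup.leftRel (Λ'.subgroupOf Λ)) a b) →
      Measure.map (fun x : X => (a : Γ) • x) μ = Measure.map (fun x : X => (b : Γ) • x) μ := by
    intro a b hab
    rw [QuotientGroup.leftRel_apply] at hab
    have h1 : ((a⁻¹ * b : Λ) : Γ) ∈ Λ' := hab
    calc Measure.map (fun x : X => (a : Γ) • x) μ
        = Measure.map (fun x : X => (a : Γ) • x)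
            (Measure.map (fun x : X => ((a⁻¹ * b : Λ) : Γ) • x) μ) := by
          rw [hinv _ h1]
      _ = Measure.map (fun x : X => ((a : Γ) * ((a⁻¹ * b : Λ) : Γ)) • x) μ := comp _ _ _
      _ = Measure.map (fun x : X => (b : Γ) • x) μ := by
          congr 2
          push_cast
          group
  let F : (Λ ⧸ Λ'.subgroupOf Λ) → Measure X :=
    Quotient.lift (fun l : Λ => Measure.map (fun x : X => (l : Γ) • x) μ) hwd
  have hSrange : S = Set.range F := by
    ext ν
    constructor
    · rintro ⟨l, hl, rfl⟩
      exact ⟨QuotientGroup.mk (⟨l, hl⟩ : Λ), rfl⟩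
    · rintro ⟨q, rfl⟩
      induction q using Quotient.inductionOn with
      | h l => exact ⟨(l : Γ), l.2, rfl⟩
  have hSfin : S.Finite := by
    rw [hSrange]; exact Set.finite_range F
  set O : Finset (Measure X) := hSfin.toFinset with hOdef
  have hOcoe : (O : Set (Measure X)) = S := hSfin.coe_toFinset
  have hmemO : ∀ ν : Measure X, ν ∈ O ↔ ∃ l ∈ Λ, ν = Measure.map (fun x : X => l • x) μ := by
    intro ν
    rw [← Finset.mem_coe, hOcoe]; rfl
  have hμO : μ ∈ O := (hmemO μ).2 ⟨1, one_mem Λ, (mapid μ).symm⟩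
  set n : ℝ≥0∞ := (O.card : ℝ≥0∞) with hn
  have hn0 : n ≠ 0 := by
    simp only [hn, Ne, Nat.cast_eq_zero, Finset.card_eq_zero]
    intro h
    rw [h] at hμO; simp at hμO
  have hntop : n ≠ ∞ := by simp [hn]
  set μ' : Measure X := n⁻¹ • ∑ ν ∈ O, ν with hμ'
  -- each ν in O is a probability measure
  have hprobO : ∀ ν ∈ O, ν Set.univ = 1 := by
    intro ν hν
    obtain ⟨l, _, rfl⟩ := (hmemO ν).1 hν
    have : IsProbabilityMeasure (Measure.map (fun x : X => l • x) μ) :=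
      Measure.isProbabilityMeasure_map (hmeas l).aemeasurable
    exact this.measure_univ
  have hsum_univ : (∑ ν ∈ O, ν) Set.univ = n := by
    rw [Measure.finset_sum_apply]
    rw [Finset.sum_congr rfl hprobO]
    simp [hn]
  have hprob' : IsProbabilityMeasure μ' := by
    constructor
    rw [hμ', Measure.smul_apply, hsum_univ, smul_eq_mul, ENNReal.inv_mul_cancel hn0 hntop]
  -- pushforward of μ' by any γ
  have map_sum : ∀ g : Γ, Measure.map (fun x : X => g • x) μ'
      = n⁻¹ • ∑ ν ∈ O, Measure.map (fun x : X => g • x) ν := by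
    intro g
    rw [hμ', Measure.map_smul]
    congr 1
    rw [← Measure.mapₗ_apply_of_measurable (hmeas g), map_sum]
    exact Finset.sum_congr rfl fun ν _ => Measure.mapₗ_apply_of_measurable (hmeas g) ν
  refine ⟨O, μ', hOcoe, rfl, hprob', ?_, ?_⟩
  · -- Λ-invariance
    intro l hl
    rw [map_sum l, hμ']
    congr 1
    refine Finset.sum_nbij' (fun ν => Measure.map (fun x : X => l • x) ν)
      (fun ν => Measure.map (fun x : X => l⁻¹ • x) ν) ?_ ?_ ?_ ?_ ?_
    · intro ν hν
      obtain ⟨l₀, hl₀, rfl⟩ := (hmemO ν).1 hν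
      show Measure.map (fun x : X => l • x) (Measure.map (fun x : X => l₀ • x) μ) ∈ O
      rw [comp]
      exact (hmemO _).2 ⟨l * l₀, mul_mem hl hl₀, rfl⟩
    · intro ν hν
      obtain ⟨l₀, hl₀, rfl⟩ := (hmemO ν).1 hν
      show Measure.map (fun x : X => l⁻¹ • x) (Measure.map (fun x : X => l₀ • x) μ) ∈ O
      rw [comp]
      exact (hmemO _).2 ⟨l⁻¹ * l₀, mul_mem (inv_mem hl) hl₀, rfl⟩
    · intro ν _
      show Measure.map (fun x : X => l⁻¹ • x) (Measure.map (fun x : X => l • x) ν) = ν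
      rw [comp]
      simp [mapid]
    · intro ν _
      show Measure.map (fun x : X => l • x) (Measure.map (fun x : X => l⁻¹ • x) ν) = ν
      rw [comp]
      simp [mapid]
    · intro ν _; rfl
  · -- non-singularity
    intro γ hγ hsing
    obtain ⟨A, hA, h1, h2⟩ := hsing
    -- μ' Aᶜ = 0 gives μ Aᶜ = 0
    have hμAc : μ Aᶜ = 0 := by
      rw [hμ', Measure.smul_apply, smul_eq_mul] at h2
      have hsum0 : (∑ ν ∈ O, ν) Aᶜ = 0 := by
        rcases (mul_eq_zero.1 h2) with h | h
        · exact absurd h (by simp [ENNReal.inv_eq_zero, hntop])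
        · exact h
      rw [Measure.finset_sum_apply] at hsum0
      exact (Finset.sum_eq_zero_iff.1 hsum0) μ hμO
    have hμA : μ A = 0 := by
      rw [map_sum γ, Measure.smul_apply, smul_eq_mul] at h1
      have hsum0 : (∑ ν ∈ O, Measure.map (fun x : X => γ • x) ν) A = 0 := by
        rcases (mul_eq_zero.1 h1) with h | h
        · exact absurd h (by simp [ENNReal.inv_eq_zero, hntop])
        · exact h
      rw [Measure.finset_sum_apply] at hsum0
      have := (Finset.sum_eq_zero_iff.1 hsum0) μ hμO
      rwa [hγ] at this
    have : μ Set.univ = 0 := by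
      rw [← measure_add_measure_compl hA, hμA, hμAc, add_zero]
    rw [hprob.measure_univ] at this
    exact one_ne_zero this
end

section
/- Let G be a group acting on a measurable space X by measurable bijections and let ν be a G-invariant probability measure on X. Assume the action is ergodic in the sense that every measurable subset A ⊆ X with g•A = A for all g ∈ G satisfies ν(A) = 0 or ν(A) = 1. Let W ⊆ X be a measurable set with ν(W) > 0 such that for every g ∈ G, either g•W = W (as sets) or ν(g•W ∩ W) = 0. Then the family of translates {g•W : g ∈ G} is finite, of cardinality at most 1/ν(W), and there exist finitely many elements g₁, …, g_n ∈ G such that ν(g₁•W ∪ ⋯ ∪ g_n•W) = 1. -/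
open MeasureTheory
open scoped Pointwise

/-- For an ergodic measure-preserving action of `G` on `(X, ν)` and a positive-measure
set `W` whose translates are either equal to `W` or essentially disjoint from it, the
family of translates `{g • W : g ∈ G}` is finite of cardinality at most `1 / ν W`, and
finitely many translates cover `X` up to measure zero. -/
theorem translates_finite_and_cover
    {G X : Type*} [Group G] [MeasurableSpace X] [MulAction G X]
    (hmeas : ∀ g : G, Measurable fun x : X => g • x)
    (ν : Measure X) (hprob : IsProbabilityMeasure ν)
    (hinv : ∀ (g : G) (A : Set X), MeasurableSet A → ν (g • A) = ν A)
    (herg : ∀ A : Set X, MeasurableSet A → (∀ g : G, g • A = A) → ν A = 0 ∨ ν A = 1)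
    (W : Set X) (hW : MeasurableSet W) (hWpos : 0 < ν W)
    (halt : ∀ g : G, g • W = W ∨ ν ((g • W) ∩ W) = 0) :
    ({A : Set X | ∃ g : G, A = g • W}.Finite ∧
      ({A : Set X | ∃ g : G, A = g • W}.ncard : ENNReal) ≤ 1 / ν W) ∧
    ∃ (n : ℕ) (g : Fin n → G), ν (⋃ i, g i • W) = 1 := by
  classical
  set 𝒜 : Set (Set X) := {A : Set X | ∃ g : G, A = g • W} with h𝒜
  have hmeasW : ∀ g : G, MeasurableSet (g • W) := by
    intro g
    have h : g • W = (fun x : X => g⁻¹ • x) ⁻¹' W := by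
      ext x
      simp [Set.mem_smul_set_iff_inv_smul_mem]
    rw [h]
    exact (hmeas g⁻¹) hW
  have hνg : ∀ g : G, ν (g • W) = ν W := fun g => hinv g W hW
  have hdisj : ∀ g h : G, g • W ≠ h • W → ν (g • W ∩ h • W) = 0 := by
    intro g h hne
    have hm : MeasurableSet (W ∩ (g⁻¹ * h) • W) := hW.inter (hmeasW _)
    have key : ν (g • W ∩ h • W) = ν (W ∩ (g⁻¹ * h) • W) := by
      rw [← hinv g _ hm]
      congr 1
      rw [Set.smul_set_inter, smul_smul, mul_inv_cancel_left]
    rcases halt (g⁻¹ * h) with he | h0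
    · exfalso
      apply hne
      have : g • ((g⁻¹ * h) • W) = g • W := by rw [he]
      rw [smul_smul, mul_inv_cancel_left] at this
      exact this.symm
    · rw [key, Set.inter_comm]
      exact h0
  have hcard : ∀ F : Finset (Set X), ↑F ⊆ 𝒜 → (F.card : ENNReal) * ν W ≤ 1 := by
    intro F hF
    have hpair : (↑F : Set (Set X)).Pairwise (Function.onFun (MeasureTheory.AEDisjoint ν) id) := by
      intro A hA B hB hAB
      obtain ⟨g, rfl⟩ := hF hA
      obtain ⟨h, rfl⟩ := hF hB
      exact hdisj g h hAB
    have hnull : ∀ b ∈ F, NullMeasurableSet (id b) ν := by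
      intro b hb
      obtain ⟨g, rfl⟩ := hF hb
      exact (hmeasW g).nullMeasurableSet
    have hun := measure_biUnion_finset₀ hpair hnull
    have hsum : ∑ b ∈ F, ν (id b) = F.card * ν W := by
      have h1 : ∀ b ∈ F, ν (id b) = ν W := by
        intro b hb
        obtain ⟨g, rfl⟩ := hF hb
        exact hνg g
      rw [Finset.sum_congr rfl h1, Finset.sum_const, nsmul_eq_mul]
    calc (F.card : ENNReal) * ν W = ν (⋃ b ∈ F, id b) := by rw [hun, hsum]
      _ ≤ 1 := prob_le_one
  have hνW_ne : ν W ≠ 0 := hWpos.ne'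
  have hνW_top : ν W ≠ ⊤ := measure_ne_top ν W
  have hfin : 𝒜.Finite := by
    by_contra hinf
    obtain ⟨N, hN⟩ := ENNReal.exists_nat_gt (ENNReal.div_lt_top ENNReal.one_ne_top hνW_ne).ne
    obtain ⟨F, hFsub, hFcard⟩ := Set.Infinite.exists_subset_card_eq hinf N
    have h1 := hcard F hFsub
    rw [hFcard] at h1
    have h2 : (1 : ENNReal) < N * ν W := by
      rwa [ENNReal.div_lt_iff (Or.inl hνW_ne) (Or.inl hνW_top)] at hN
    exact absurd h1 (not_le.mpr h2)
  have hle : (𝒜.ncard : ENNReal) ≤ 1 / ν W := by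
    rw [ENNReal.le_div_iff_mul_le (Or.inl hνW_ne) (Or.inl hνW_top),
      Set.ncard_eq_toFinset_card 𝒜 hfin]
    exact hcard hfin.toFinset (by simp)
  refine ⟨⟨hfin, hle⟩, ?_⟩
  -- the union of all translates
  set S : Set X := ⋃ A ∈ 𝒜, A with hS
  have hS_eq : S = ⋃ g : G, g • W := by
    ext x
    simp only [hS, h𝒜, Set.mem_iUnion, Set.mem_setOf_eq]
    constructor
    · rintro ⟨A, ⟨g, rfl⟩, hx⟩; exact ⟨g, hx⟩
    · rintro ⟨g, hx⟩; exact ⟨g • W, ⟨g, rfl⟩, hx⟩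
  have hSmeas : MeasurableSet S := by
    apply Set.Finite.measurableSet_biUnion hfin
    rintro A ⟨g, rfl⟩
    exact hmeasW g
  have hSinv : ∀ g : G, g • S = S := by
    intro g
    rw [hS_eq, Set.smul_set_iUnion]
    ext x
    simp only [Set.mem_iUnion]
    constructor
    · rintro ⟨h, hx⟩
      rw [smul_smul] at hx
      exact ⟨g * h, hx⟩
    · rintro ⟨h, hx⟩
      refine ⟨g⁻¹ * h, ?_⟩
      rwa [smul_smul, mul_inv_cancel_left]
  have hSone : ν S = 1 := by
    rcases herg S hSmeas hSinv with h0 | h1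
    · exfalso
      have hWS : W ⊆ S := by
        rw [hS_eq]
        intro x hx
        exact Set.mem_iUnion.mpr ⟨1, by simpa using hx⟩
      have hmono := measure_mono (μ := ν) hWS
      rw [h0] at hmono
      exact absurd (le_antisymm hmono bot_le) hνW_ne
    · exact h1
  obtain ⟨n, f, -, hfr⟩ := hfin.fin_param
  have hmem : ∀ i : Fin n, f i ∈ 𝒜 := by
    intro i; rw [← hfr]; exact Set.mem_range_self i
  choose g hg using fun i : Fin n => hmem i
  refine ⟨n, g, ?_⟩
  have hU : (⋃ i, g i • W) = S := by
    have h1 : (⋃ i, g i • W) = ⋃ i, f i := by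
      apply Set.iUnion_congr
      intro i
      exact (hg i).symm
    rw [h1, hS, ← hfr, Set.biUnion_range]
  rw [hU, hSone]
end

section
/- Every norm-one element of ℤ[1/5][i] is generated by i and (4+3i)/5: precisely, if z ∈ ℂ satisfies z · conj(z) = 1 and there exist n ∈ ℕ and a Gaussian integer w ∈ ℤ[i] with w = 5^n · z (i.e., z ∈ ℤ[1/5][i]), then there exist a ∈ {0, 1, 2, 3} and m ∈ ℤ such that z = i^a · ((4 + 3i)/5)^m. -/
open Complex

private lemma prime_of_norm_five (x : GaussianInt) (h : x.norm = 5) : Prime x := by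
  rw [← UniqueFactorizationMonoid.irreducible_iff_prime]
  constructor
  · rw [← Zsqrtd.norm_eq_one_iff, h]; decide
  · intro a b hab
    have h2 : a.norm.natAbs * b.norm.natAbs = 5 := by
      rw [← Int.natAbs_mul, ← Zsqrtd.norm_mul, ← hab, h]; rfl
    rcases (Nat.prime_five).eq_one_or_self_of_dvd a.norm.natAbs ⟨_, h2.symm⟩ with ha | ha
    · exact Or.inl (Zsqrtd.norm_eq_one_iff.mp ha)
    · right; apply Zsqrtd.norm_eq_one_iff.mp; rw [ha] at h2; omega

private lemma key : ∀ (n : ℕ) (z : ℂ), z * (starRingEnd ℂ) z = 1 →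
    ∀ w : GaussianInt, GaussianInt.toComplex w = 5 ^ n * z →
    ∃ (k m : ℤ), z = Complex.I ^ k * ((4 + 3 * Complex.I) / 5) ^ m := by
  intro n
  induction n with
  | zero =>
    intro z hz w hw
    rw [pow_zero, one_mul] at hw
    have hnorm : w.norm = 1 := by
      have : (w.norm : ℂ) = 1 := by
        rw [GaussianInt.intCast_complex_norm, hw]
        rw [Complex.mul_conj] at hz
        exact_mod_cast hz
      exact_mod_cast this
    have h1 : w.re ^ 2 + w.im ^ 2 = 1 := by
      have h2 := hnorm
      simp only [Zsqrtd.norm] at h2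
      nlinarith [h2]
    have i2 : (I : ℂ) ^ (2 : ℤ) = -1 := by
      rw [show (2:ℤ) = ((2:ℕ):ℤ) from rfl, zpow_natCast, Complex.I_sq]
    have i3 : (I : ℂ) ^ (3 : ℤ) = -I := by
      rw [show (3:ℤ) = ((3:ℕ):ℤ) from rfl, zpow_natCast, pow_succ, Complex.I_sq]
      ring
    have hre1 : -1 ≤ w.re := by nlinarith [sq_nonneg w.im]
    have hre2 : w.re ≤ 1 := by nlinarith [sq_nonneg w.im]
    have him1 : -1 ≤ w.im := by nlinarith [sq_nonneg w.re]
    have him2 : w.im ≤ 1 := by nlinarith [sq_nonneg w.re]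
    have hwz : z = (w.re : ℂ) + w.im * I := by rw [← hw, GaussianInt.toComplex_def]
    have hc : (w.re = 0 ∧ (w.im = 1 ∨ w.im = -1)) ∨ (w.im = 0 ∧ (w.re = 1 ∨ w.re = -1)) := by
      interval_cases h : w.re <;> interval_cases h' : w.im <;> revert h1 <;> decide
    rcases hc with ⟨h0, h1' | h1'⟩ | ⟨h0, h1' | h1'⟩
    · exact ⟨1, 0, by rw [hwz, h0, h1']; norm_num⟩
    · exact ⟨3, 0, by rw [hwz, h0, h1', i3]; norm_num⟩
    · exact ⟨0, 0, by rw [hwz, h0, h1']; norm_num⟩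
    · exact ⟨2, 0, by rw [hwz, h0, h1', i2]; norm_num⟩
  | succ n ih =>
    intro z hz w hw
    set p : GaussianInt := ⟨2, 1⟩ with hp
    set q : GaussianInt := ⟨2, -1⟩ with hq
    have hpq : p * q = 5 := by decide
    have hsp : star p = q := by decide
    have hsq : star q = p := by decide
    have hpprime : Prime p := prime_of_norm_five p (by decide)
    have hqprime : Prime q := prime_of_norm_five q (by decide)
    have hnormz : Complex.normSq z = 1 := by
      rw [Complex.mul_conj] at hz; exact_mod_cast hz
    have hnorm : w.norm = 5 ^ (2 * n + 2) := by
      have h1 : (w.norm : ℂ) = 5 ^ (2 * n + 2) := by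
        rw [GaussianInt.intCast_complex_norm, hw, map_mul, map_pow, hnormz, mul_one]
        have h5 : Complex.normSq (5 : ℂ) = 25 := by
          norm_num [Complex.normSq_apply]
        rw [h5]
        push_cast
        rw [show 2 * n + 2 = 2 * (n + 1) by ring, pow_mul]
        norm_num
      exact_mod_cast h1
    have hws : w * star w = 5 ^ (2 * n + 2) := by
      rw [← Zsqrtd.norm_eq_mul_conj, hnorm]
      push_cast
      norm_num
    have hdvd_or : p ∣ w ∨ q ∣ w := by
      have h5 : p ∣ w * star w := by
        rw [hws]; exact Dvd.dvd.trans ⟨q, hpq.symm⟩ (dvd_pow_self 5 (by omega))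
      rcases hpprime.dvd_or_dvd h5 with h | h
      · exact Or.inl h
      · right
        obtain ⟨c, hc⟩ := h
        refine ⟨star c, ?_⟩
        rw [← star_star w, hc, star_mul', hsp]
    have tri : p ^ 2 ∣ w ∨ q ^ 2 ∣ w ∨ (5 : GaussianInt) ∣ w := by
      have haux : ∀ r s : GaussianInt, Prime r → Prime s → star r = s → r * s = 5 →
          r ∣ w → r ^ 2 ∣ w ∨ (5 : GaussianInt) ∣ w := by
        rintro r s hr hs hrs hrs5 ⟨w₁, hw₁⟩
        by_cases hrw₁ : r ∣ w₁
        · left; obtain ⟨c, hc⟩ := hrw₁; exact ⟨c, by rw [hw₁, hc]; ring⟩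
        · right
          have h5ne : (5 : GaussianInt) ≠ 0 := by decide
          have hcanc : w₁ * star w₁ = 5 ^ (2 * n + 1) := by
            apply mul_left_cancel₀ h5ne
            have h2 : (5 : GaussianInt) * (w₁ * star w₁) = (r * w₁) * (star r * star w₁) := by
              rw [hrs, ← hrs5]; ring
            rw [h2, ← star_mul', ← hw₁, hws]
            ring
          have hrd : r ∣ w₁ * star w₁ := by
            rw [hcanc]
            exact Dvd.dvd.trans ⟨s, hrs5.symm⟩ (dvd_pow_self 5 (by omega))
          rcases hr.dvd_or_dvd hrd with h | h
          · exact absurd h hrw₁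
          · obtain ⟨c, hc⟩ := h
            have hsw : s ∣ w₁ := by
              refine ⟨star c, ?_⟩
              rw [← star_star w₁, hc, star_mul', hrs]
            obtain ⟨c', hc'⟩ := hsw
            exact ⟨c', by rw [hw₁, hc', ← hrs5]; ring⟩
      rcases hdvd_or with h | h
      · rcases haux p q hpprime hqprime hsp hpq h with h' | h'
        · exact Or.inl h'
        · exact Or.inr (Or.inr h')
      · rcases haux q p hqprime hpprime hsq (by rw [← hpq]; ring) h with h' | h'
        · exact Or.inr (Or.inl h')
        · exact Or.inr (Or.inr h')
    have h5C : (5 : ℂ) ≠ 0 := by norm_num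
    have hu : (4 + 3 * I) / 5 ≠ 0 := by
      intro h
      rw [div_eq_zero_iff] at h
      rcases h with h | h
      · have := congrArg Complex.im h; simp at this
      · exact h5C h
    have hpr : (3 - 4 * I) * (3 + 4 * I) = (25 : ℂ) := by
      linear_combination (-16 : ℂ) * Complex.I_sq
    rcases tri with ⟨w', hw'⟩ | ⟨w', hw'⟩ | ⟨w', hw'⟩
    · -- p² ∣ w
      have hp2 : GaussianInt.toComplex (p ^ 2) = 3 + 4 * I := by
        have hpv : p ^ 2 = ⟨3, 4⟩ := by decide
        rw [hpv, GaussianInt.toComplex_def]; norm_num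
      have h34 : (3 + 4 * I : ℂ) ≠ 0 := fun h => by simpa using congrArg Complex.im h
      set z' : ℂ := z * (3 - 4 * I) / 5 with hz'def
      have hz' : z' * (starRingEnd ℂ) z' = 1 := by
        rw [Complex.mul_conj]
        have hn : Complex.normSq z' = 1 := by
          rw [hz'def, map_div₀, map_mul, hnormz]
          have : Complex.normSq (3 - 4 * I) = 25 := by
            norm_num [Complex.normSq_apply]
          rw [this]
          norm_num [Complex.normSq_apply]
        rw [hn]; norm_num
      have hwz' : GaussianInt.toComplex w' = 5 ^ n * z' := by
        have h1 : (3 + 4 * I) * GaussianInt.toComplex w' = 5 ^ (n + 1) * z := by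
          rw [← hp2, ← map_mul, ← hw', hw]
        apply mul_left_cancel₀ h34
        rw [h1, hz'def]
        calc (5:ℂ) ^ (n + 1) * z = ((3 - 4*I) * (3 + 4*I)) * (5 ^ n * z) / 25 * 5 := by
              rw [hpr]; ring
          _ = (3 + 4 * I) * (5 ^ n * (z * (3 - 4 * I) / 5)) := by ring
      obtain ⟨k, m, hkm⟩ := ih z' hz' w' hwz'
      refine ⟨k + 1, m - 1, ?_⟩
      have hzz : z = z' * ((3 + 4 * I) / 5) := by
        rw [hz'def]
        calc z = z * ((3 - 4*I) * (3 + 4*I)) / 25 := by rw [hpr]; ring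
          _ = z * (3 - 4 * I) / 5 * ((3 + 4 * I) / 5) := by ring
      have keyfact : ((3 + 4 * I) / 5) * ((4 + 3 * I) / 5) = (I : ℂ) := by
        field_simp
        linear_combination (12 : ℂ) * Complex.I_sq
      have key2 : I * ((4 + 3 * I) / 5)⁻¹ = (3 + 4 * I) / 5 := by
        rw [← div_eq_mul_inv, div_eq_iff hu]
        exact keyfact.symm
      rw [hzz, hkm, ← key2]
      rw [zpow_add₀ I_ne_zero, zpow_sub₀ hu, zpow_one, zpow_one, div_eq_mul_inv]
      ring
    · -- q² ∣ w
      have hq2 : GaussianInt.toComplex (q ^ 2) = 3 - 4 * I := by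
        have hqv : q ^ 2 = ⟨3, -4⟩ := by decide
        rw [hqv, GaussianInt.toComplex_def]; push_cast; ring
      have h34 : (3 - 4 * I : ℂ) ≠ 0 := fun h => by simpa using congrArg Complex.im h
      set z' : ℂ := z * (3 + 4 * I) / 5 with hz'def
      have hz' : z' * (starRingEnd ℂ) z' = 1 := by
        rw [Complex.mul_conj]
        have hn : Complex.normSq z' = 1 := by
          rw [hz'def, map_div₀, map_mul, hnormz]
          have : Complex.normSq (3 + 4 * I) = 25 := by
            norm_num [Complex.normSq_apply]
          rw [this]
          norm_num [Complex.normSq_apply]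
        rw [hn]; norm_num
      have hwz' : GaussianInt.toComplex w' = 5 ^ n * z' := by
        have h1 : (3 - 4 * I) * GaussianInt.toComplex w' = 5 ^ (n + 1) * z := by
          rw [← hq2, ← map_mul, ← hw', hw]
        apply mul_left_cancel₀ h34
        rw [h1, hz'def]
        calc (5:ℂ) ^ (n + 1) * z = ((3 - 4*I) * (3 + 4*I)) * (5 ^ n * z) / 25 * 5 := by
              rw [hpr]; ring
          _ = (3 - 4 * I) * (5 ^ n * (z * (3 + 4 * I) / 5)) := by ring
      obtain ⟨k, m, hkm⟩ := ih z' hz' w' hwz'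
      refine ⟨k - 1, m + 1, ?_⟩
      have hzz : z = z' * ((3 - 4 * I) / 5) := by
        rw [hz'def]
        calc z = z * ((3 - 4*I) * (3 + 4*I)) / 25 := by rw [hpr]; ring
          _ = z * (3 + 4 * I) / 5 * ((3 - 4 * I) / 5) := by ring
      have keyfact : I * ((3 - 4 * I) / 5) = ((4 + 3 * I) / 5 : ℂ) := by
        field_simp
        linear_combination (-4 : ℂ) * Complex.I_sq
      have key2 : I⁻¹ * ((4 + 3 * I) / 5) = (3 - 4 * I) / 5 := by
        rw [mul_comm, ← div_eq_mul_inv, div_eq_iff I_ne_zero, mul_comm]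
        linear_combination keyfact + (8/5 : ℂ) * Complex.I_sq
      rw [hzz, hkm, ← key2]
      rw [zpow_sub₀ I_ne_zero, zpow_add₀ hu, zpow_one, zpow_one, div_eq_mul_inv]
      ring
    · -- 5 ∣ w
      have hwz' : GaussianInt.toComplex w' = 5 ^ n * z := by
        have h1 : (5 : ℂ) * GaussianInt.toComplex w' = 5 ^ (n + 1) * z := by
          have h2 := congrArg GaussianInt.toComplex hw'
          rw [map_mul, map_ofNat] at h2
          rw [← h2, hw]
        apply mul_left_cancel₀ h5C
        rw [h1]; ring
      exact ih z hz w' hwz'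

/-- Every norm-one element of `ℤ[1/5][i] ⊆ ℂ` is of the form `i^a * ((4+3i)/5)^m`
with `a ∈ {0,1,2,3}` and `m ∈ ℤ`. -/
theorem norm_one_unit_Z_one_fifth_i (z : ℂ) (hz : z * (starRingEnd ℂ) z = 1)
    (hden : ∃ (n : ℕ) (w : GaussianInt), GaussianInt.toComplex w = 5 ^ n * z) :
    ∃ (a : Fin 4) (m : ℤ), z = Complex.I ^ (a : ℕ) * ((4 + 3 * Complex.I) / 5) ^ m := by
  obtain ⟨n, w, hw⟩ := hden
  obtain ⟨k, m, hkm⟩ := key n z hz w hw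
  have h4 : (I : ℂ) ^ (4 : ℤ) = 1 := by
    rw [show (4:ℤ) = ((4:ℕ):ℤ) from rfl, zpow_natCast]
    norm_num [pow_succ, Complex.I_mul_I]
  have h1 : 0 ≤ k % 4 := Int.emod_nonneg k (by norm_num)
  have h2 : k % 4 < 4 := Int.emod_lt_of_pos k (by norm_num)
  refine ⟨⟨(k % 4).toNat, by omega⟩, m, ?_⟩
  rw [hkm]
  congr 1
  have hds : k = 4 * (k / 4) + k % 4 := (Int.mul_ediv_add_emod k 4).symm
  calc (I : ℂ) ^ k = I ^ (4 * (k / 4) + k % 4) := by rw [← hds]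
    _ = (I ^ (4:ℤ)) ^ (k / 4) * I ^ (k % 4) := by
        rw [zpow_add₀ I_ne_zero, zpow_mul]
    _ = I ^ (k % 4) := by rw [h4, one_zpow, one_mul]
    _ = I ^ (k % 4).toNat := by
        rw [← zpow_natCast, Int.toNat_of_nonneg h1]
end
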